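/- Fix k ≥ 3 and let S = ⟨2k+1, 6k-5, 6k-1⟩. Then the set of catenary degrees C(S) contains {4, 3k-1} and contains the interval {2k-1, 2k, ..., 3k-3}. In particular |C(S)| ≥ k. -/

import Mathlib

/-- The set of factorizations of `n` over the generators `gens`. -/
def Zset {k : ℕ} (gens : Fin k → ℕ) (n : ℕ) : Set (Fin k → ℕ) :=
  {a | ∑ i, a i * gens i = n}

/-- The length of a factorization. -/
def flen {k : ℕ} (a : Fin k → ℕ) : ℕ := ∑ i, a i

/-- The distance between two factorizations:
`max (|a - gcd(a,b)|, |b - gcd(a,b)|)` (componentwise gcd = min). -/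
def fdist {k : ℕ} (a b : Fin k → ℕ) : ℕ :=
  max (∑ i, (a i - b i)) (∑ i, (b i - a i))

/-- There is an `N`-chain of factorizations within `Z` from `a` to `b`. -/
def IsNChain {k : ℕ} (Z : Set (Fin k → ℕ)) (N : ℕ) (a b : Fin k → ℕ) : Prop :=
  ∃ l : List (Fin k → ℕ), l.head? = some a ∧ l.getLast? = some b ∧
    (∀ x ∈ l, x ∈ Z) ∧ l.Chain' (fun x y => fdist x y ≤ N)

/-- The catenary degree of `n`: the least `N` such that any two factorizations
of `n` are connected by an `N`-chain. -/
noncomputable def catDeg {k : ℕ} (gens : Fin k → ℕ) (n : ℕ) : ℕ :=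
  sInf {N | ∀ a ∈ Zset gens n, ∀ b ∈ Zset gens n, IsNChain (Zset gens n) N a b}

/-- `n` is a Betti element: the graph on `Z(n)` joining factorizations with
nonzero componentwise gcd is disconnected. -/
def IsBetti {k : ℕ} (gens : Fin k → ℕ) (n : ℕ) : Prop :=
  ∃ a ∈ Zset gens n, ∃ b ∈ Zset gens n,
    ¬ Relation.ReflTransGen
      (fun x y => x ∈ Zset gens n ∧ y ∈ Zset gens n ∧ ∃ i, min (x i) (y i) ≠ 0) a b

/-- The set of catenary degrees of elements of the monoid generated by `gens`. -/
def CatSet {k : ℕ} (gens : Fin k → ℕ) : Set ℕ :=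
  {c | ∃ n, (Zset gens n).Nonempty ∧ catDeg gens n = c}

namespace CatAux

variable {m : ℕ} {Z : Set (Fin m → ℕ)} {N : ℕ} {a b c : Fin m → ℕ}

lemma fdist_comm (a b : Fin m → ℕ) : fdist a b = fdist b a := max_comm _ _

lemma fdist_self (a : Fin m → ℕ) : fdist a a = 0 := by simp [fdist]

lemma chain_refl (ha : a ∈ Z) : IsNChain Z N a a :=
  ⟨[a], rfl, rfl, by simpa using ha, List.isChain_singleton _⟩

lemma chain_edge (ha : a ∈ Z) (hb : b ∈ Z) (h : fdist a b ≤ N) : IsNChain Z N a b :=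
  ⟨[a, b], rfl, rfl, by simp [ha, hb], List.isChain_pair.2 h⟩

lemma chain_symm (h : IsNChain Z N a b) : IsNChain Z N b a := by
  obtain ⟨l, h1, h2, h3, h4⟩ := h
  refine ⟨l.reverse, by simpa using h2, by simpa using h1,
    fun x hx => h3 x (by simpa using hx), ?_⟩
  refine List.isChain_reverse.2 ?_
  refine h4.imp ?_
  intro x y h
  show fdist y x ≤ N
  rwa [fdist_comm]

lemma chain_trans (hab : IsNChain Z N a b) (hbc : IsNChain Z N b c) :
    IsNChain Z N a c := by
  obtain ⟨l1, h1, h2, h3, h4⟩ := hab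
  obtain ⟨l2, g1, g2, g3, g4⟩ := hbc
  refine ⟨l1 ++ l2, ?_, ?_, ?_, ?_⟩
  · rw [List.head?_append, h1]; rfl
  · rw [List.getLast?_append, g2]
    cases l2 <;> simp_all
  · intro x hx; rcases List.mem_append.1 hx with h | h
    · exact h3 x h
    · exact g3 x h
  · refine h4.append g4 ?_
    intro x hx y hy
    rw [h2, Option.mem_some_iff] at hx
    rw [g1, Option.mem_some_iff] at hy
    subst hx hy
    simp [fdist_self]

lemma no_chain (hne : a ≠ b)
    (hfar : ∀ x ∈ Z, x ≠ a → N < fdist a x) : ¬ IsNChain Z N a b := by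
  rintro ⟨l, h1, h2, h3, h4⟩
  induction l with
  | nil => simp at h1
  | cons x t ih =>
    have hx : x = a := by simpa using h1
    cases t with
    | nil =>
      have hb : x = b := by simpa using h2
      exact hne (hx ▸ hb)
    | cons y t2 =>
      have hy : y = a := by
        by_contra hne2
        have h5 : fdist x y ≤ N := (List.isChain_cons_cons.1 h4).1
        rw [hx] at h5
        have := hfar y (h3 y (by simp)) (by simpa using hne2)
        omega
      apply ih
      · rw [List.head?_cons, hy]
      · simpa using h2
      · intro z hz; exact h3 z (by simp [hz])
      · exact (List.isChain_cons_cons.1 h4).2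

lemma catDeg_eq {gens : Fin m → ℕ} {n c : ℕ}
    (hup : ∀ a ∈ Zset gens n, ∀ b ∈ Zset gens n, IsNChain (Zset gens n) c a b)
    (hlb : ∀ N, (∀ a ∈ Zset gens n, ∀ b ∈ Zset gens n, IsNChain (Zset gens n) N a b) → c ≤ N) :
    catDeg gens n = c :=
  le_antisymm (Nat.sInf_le hup) (le_csInf ⟨c, hup⟩ hlb)

lemma catdeg_pair {gens : Fin m → ℕ} {n : ℕ} {u v : Fin m → ℕ}
    (hu : u ∈ Zset gens n) (hv : v ∈ Zset gens n) (hne : u ≠ v)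
    (hchar : ∀ x ∈ Zset gens n, x = u ∨ x = v) :
    catDeg gens n = fdist u v := by
  apply catDeg_eq
  · intro x hx y hy
    rcases hchar x hx with rfl | rfl <;> rcases hchar y hy with rfl | rfl
    · exact chain_refl hx
    · exact chain_edge hu hv le_rfl
    · exact chain_edge hv hu (le_of_eq (fdist_comm _ _))
    · exact chain_refl hx
  · intro N hN
    by_contra hcon
    push_neg at hcon
    refine no_chain hne ?_ (hN u hu v hv)
    intro z hz hzne
    rcases hchar z hz with rfl | rfl
    · exact absurd rfl hzne
    · omega

lemma div4' (g X q : ℤ) (hodd : ¬ (2:ℤ) ∣ g) (h : q * g = 4 * X) :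
    ∃ r : ℤ, q = 4*r ∧ r * g = X := by
  have hg : ¬ Even g := by rwa [even_iff_two_dvd]
  have h1 : Even q := by
    rcases Int.even_mul.1 (show Even (q*g) from ⟨2*X, by linarith⟩) with h' | h'
    · exact h'
    · exact absurd h' hg
  obtain ⟨q1, rfl⟩ := h1
  have e1 : q1 * g = 2 * X := by
    have e : 2 * (q1 * g) = 2 * (2 * X) := by linear_combination h
    exact mul_left_cancel₀ two_ne_zero e
  have h2 : Even q1 := by
    rcases Int.even_mul.1 (show Even (q1*g) from ⟨X, by linarith⟩) with h' | h'
    · exact h'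
    · exact absurd h' hg
  obtain ⟨r, rfl⟩ := h2
  refine ⟨r, by ring, ?_⟩
  have e2 : 2 * (r * g) = 2 * X := by linear_combination e1
  exact mul_left_cancel₀ two_ne_zero e2

lemma mem_Z (K n : ℕ) (x : Fin 3 → ℕ) :
    x ∈ Zset ![2*K+7, 6*K+13, 6*K+17] n ↔
      x 0 * (2*K+7) + x 1 * (6*K+13) + x 2 * (6*K+17) = n := by
  simp [Zset, Fin.sum_univ_three]

lemma mem_Z' (K n a b c : ℕ) :
    (![a,b,c] ∈ Zset ![2*K+7, 6*K+13, 6*K+17] n) ↔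
      a*(2*K+7) + b*(6*K+13) + c*(6*K+17) = n := by
  rw [mem_Z]; norm_num; rfl

/-! ### characterization of `Z(12K+34)` -/

lemma charA (K : ℕ) (x : Fin 3 → ℕ)
    (hx : x ∈ Zset ![2*K+7, 6*K+13, 6*K+17] (12*K+34)) :
    x = ![0, 0, 2] ∨ x = ![3, 1, 0] := by
  rw [mem_Z] at hx
  set a := x 0 with ha
  set b := x 1 with hb
  set c := x 2 with hc
  have hZ : (a:ℤ)*(2*K+7) + b*(6*K+13) + c*(6*K+17) = 12*(K:ℤ)+34 := by
    exact_mod_cast congrArg (Nat.cast : ℕ → ℤ) hx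
  have hA : (0:ℤ) ≤ a := Int.natCast_nonneg a
  have hB : (0:ℤ) ≤ b := Int.natCast_nonneg b
  have hC : (0:ℤ) ≤ c := Int.natCast_nonneg c
  have hK : (0:ℤ) ≤ K := Int.natCast_nonneg K
  have hq : ((a:ℤ) + 3*b + 3*c - 6) * (2*K+7) = 4*(2*(b:ℤ) + c - 2) := by
    linear_combination hZ
  obtain ⟨r, hr4, hrX⟩ := div4' _ _ _ (by omega) hq
  have hBC : (b:ℤ) + c ≤ 2 := by
    by_contra hcon
    push_neg at hcon
    have h2 : (3:ℤ) * (6*K+13) ≤ ((b:ℤ)+c) * (6*K+13) := by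
      apply mul_le_mul_of_nonneg_right (by omega) (by positivity)
    nlinarith [mul_nonneg hA (show (0:ℤ) ≤ 2*(K:ℤ)+7 by positivity),
      mul_nonneg hC (show (0:ℤ) ≤ 4 by norm_num)]
  have hr0 : r = 0 := by
    have h1 : 0 ≤ r := by
      by_contra hcon
      push_neg at hcon
      have h2 : r * (2*(K:ℤ)+7) ≤ -1 * (2*(K:ℤ)+7) := by
        apply mul_le_mul_of_nonneg_right (by omega) (by positivity)
      omega
    have h2 : r ≤ 0 := by
      by_contra hcon
      push_neg at hcon
      have h2 : 1 * (2*(K:ℤ)+7) ≤ r * (2*(K:ℤ)+7) := by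
        apply mul_le_mul_of_nonneg_right (by omega) (by positivity)
      omega
    omega
  subst hr0
  have hfin : (a = 0 ∧ b = 0 ∧ c = 2) ∨ (a = 3 ∧ b = 1 ∧ c = 0) := by omega
  rcases hfin with ⟨h1, h2, h3⟩ | ⟨h1, h2, h3⟩
  · left; funext i; fin_cases i <;> simp [← ha, ← hb, ← hc] <;> omega
  · right; funext i; fin_cases i <;> simp [← ha, ← hb, ← hc] <;> omega

/-! ### characterization of `Z((3K+8)(2K+7))` -/

lemma charB (K : ℕ) (x : Fin 3 → ℕ)
    (hx : x ∈ Zset ![2*K+7, 6*K+13, 6*K+17] ((3*K+8)*(2*K+7))) :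
    x = ![3*K+8, 0, 0] ∨ x = ![0, K+3, 1] := by
  rw [mem_Z] at hx
  set a := x 0 with ha
  set b := x 1 with hb
  set c := x 2 with hc
  have hZ : (a:ℤ)*(2*K+7) + b*(6*K+13) + c*(6*K+17) = (3*(K:ℤ)+8)*(2*K+7) := by
    exact_mod_cast congrArg (Nat.cast : ℕ → ℤ) hx
  have hA : (0:ℤ) ≤ a := Int.natCast_nonneg a
  have hB : (0:ℤ) ≤ b := Int.natCast_nonneg b
  have hC : (0:ℤ) ≤ c := Int.natCast_nonneg c
  have hK : (0:ℤ) ≤ K := Int.natCast_nonneg K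
  have hq : ((a:ℤ) + 3*b + 3*c - (3*K+8)) * (2*K+7) = 4*(2*(b:ℤ) + c) := by
    linear_combination hZ
  obtain ⟨r, hr4, hrX⟩ := div4' _ _ _ (by omega) hq
  have hBC : (b:ℤ) + c ≤ (K:ℤ) + 4 := by
    by_contra hcon
    push_neg at hcon
    have h2 : ((K:ℤ)+5) * (6*K+13) ≤ ((b:ℤ)+c) * (6*K+13) := by
      apply mul_le_mul_of_nonneg_right (by omega) (by positivity)
    nlinarith [mul_nonneg hA (show (0:ℤ) ≤ 2*(K:ℤ)+7 by positivity),
      mul_nonneg hC (show (0:ℤ) ≤ 4 by norm_num)]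
  have hr0 : r = 0 ∨ r = 1 := by
    have h1 : 0 ≤ r := by
      by_contra hcon
      push_neg at hcon
      have h2 : r * (2*(K:ℤ)+7) ≤ -1 * (2*(K:ℤ)+7) := by
        apply mul_le_mul_of_nonneg_right (by omega) (by positivity)
      omega
    have h2 : r ≤ 1 := by
      by_contra hcon
      push_neg at hcon
      have h2 : 2 * (2*(K:ℤ)+7) ≤ r * (2*(K:ℤ)+7) := by
        apply mul_le_mul_of_nonneg_right (by omega) (by positivity)
      omega
    omega
  have hfin : (a = 3*K+8 ∧ b = 0 ∧ c = 0) ∨ (a = 0 ∧ b = K+3 ∧ c = 1) := by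
    rcases hr0 with rfl | rfl <;> omega
  rcases hfin with ⟨h1, h2, h3⟩ | ⟨h1, h2, h3⟩
  · left; funext i; fin_cases i <;> simp [← ha, ← hb, ← hc] <;> omega
  · right; funext i; fin_cases i <;> simp [← ha, ← hb, ← hc] <;> omega

/-! ### characterization of `Z((K+4+s)(6K+13))` -/

lemma fam_char (K s : ℕ) (hs : s ≤ K+1) (x : Fin 3 → ℕ)
    (hx : x ∈ Zset ![2*K+7, 6*K+13, 6*K+17] ((K+4+s)*(6*K+13))) :
    x = ![0, K+4+s, 0] ∨ ∃ i ≤ s, x = ![3*K+5-3*i, s-i, 2*i+1] := by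
  rw [mem_Z] at hx
  set a := x 0 with ha
  set b := x 1 with hb
  set c := x 2 with hc
  have hZ : (a:ℤ)*(2*K+7) + b*(6*K+13) + c*(6*K+17) = ((K:ℤ)+4+s)*(6*K+13) := by
    exact_mod_cast congrArg (Nat.cast : ℕ → ℤ) hx
  have hA : (0:ℤ) ≤ a := Int.natCast_nonneg a
  have hB : (0:ℤ) ≤ b := Int.natCast_nonneg b
  have hC : (0:ℤ) ≤ c := Int.natCast_nonneg c
  have hK : (0:ℤ) ≤ K := Int.natCast_nonneg K
  have hsZ : (s:ℤ) ≤ K + 1 := by exact_mod_cast hs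
  have hq : ((a:ℤ) + 3*b + 3*c - 3*((K:ℤ)+4+s)) * (2*K+7)
      = 4*(2*(b:ℤ) + c - 2*((K:ℤ)+4+s)) := by linear_combination hZ
  obtain ⟨r, hr4, hrX⟩ := div4' _ _ _ (by omega) hq
  have hBC : (b:ℤ) + c ≤ (K:ℤ) + 4 + s := by
    by_contra hcon
    push_neg at hcon
    have h2 : ((K:ℤ)+4+s+1) * (6*K+13) ≤ ((b:ℤ)+c) * (6*K+13) := by
      apply mul_le_mul_of_nonneg_right (by omega) (by positivity)
    nlinarith [mul_nonneg hA (show (0:ℤ) ≤ 2*(K:ℤ)+7 by positivity),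
      mul_nonneg hC (show (0:ℤ) ≤ 4 by norm_num)]
  have hr0 : r = 0 ∨ r = -1 := by
    have h1 : -1 ≤ r := by
      by_contra hcon
      push_neg at hcon
      have h2 : r * (2*(K:ℤ)+7) ≤ -2 * (2*(K:ℤ)+7) := by
        apply mul_le_mul_of_nonneg_right (by omega) (by positivity)
      omega
    have h2 : r ≤ 0 := by
      by_contra hcon
      push_neg at hcon
      have h2 : 1 * (2*(K:ℤ)+7) ≤ r * (2*(K:ℤ)+7) := by
        apply mul_le_mul_of_nonneg_right (by omega) (by positivity)
      omega
    omega
  rcases hr0 with rfl | rfl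
  · left
    have hfin : a = 0 ∧ b = K+4+s ∧ c = 0 := by omega
    funext i; fin_cases i <;> simp [← ha, ← hb, ← hc] <;> omega
  · right
    refine ⟨s - b, by omega, ?_⟩
    funext i; fin_cases i <;> simp [← ha, ← hb, ← hc] <;> omega


/-! ### memberships -/

lemma memA1 (K : ℕ) : ![0,0,2] ∈ Zset ![2*K+7, 6*K+13, 6*K+17] (12*K+34) := by
  rw [mem_Z']; ring

lemma memA2 (K : ℕ) : ![3,1,0] ∈ Zset ![2*K+7, 6*K+13, 6*K+17] (12*K+34) := by
  rw [mem_Z']; ring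

lemma memB1 (K : ℕ) : ![3*K+8,0,0] ∈ Zset ![2*K+7, 6*K+13, 6*K+17] ((3*K+8)*(2*K+7)) := by
  rw [mem_Z']; ring

lemma memB2 (K : ℕ) : ![0,K+3,1] ∈ Zset ![2*K+7, 6*K+13, 6*K+17] ((3*K+8)*(2*K+7)) := by
  rw [mem_Z']; ring

lemma memT (K s : ℕ) :
    ![0, K+4+s, 0] ∈ Zset ![2*K+7, 6*K+13, 6*K+17] ((K+4+s)*(6*K+13)) := by
  rw [mem_Z']; ring

lemma memF (K s i : ℕ) (hi : i ≤ s) (hs : s ≤ K+1) :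
    ![3*K+5-3*i, s-i, 2*i+1] ∈ Zset ![2*K+7, 6*K+13, 6*K+17] ((K+4+s)*(6*K+13)) := by
  rw [mem_Z']
  zify [show 3*i ≤ 3*K+5 by omega, hi]
  ring

/-! ### catenary degrees of the witnesses -/

lemma catA (K : ℕ) : catDeg ![2*K+7, 6*K+13, 6*K+17] (12*K+34) = 4 := by
  have h := catdeg_pair (memA1 K) (memA2 K) ?hne (charA K)
  case hne =>
    intro h
    have := congrFun h 2
    simp at this
  rw [h]
  simp [fdist, Fin.sum_univ_three]

lemma catB (K : ℕ) : catDeg ![2*K+7, 6*K+13, 6*K+17] ((3*K+8)*(2*K+7)) = 3*K+8 := by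
  have h := catdeg_pair (memB1 K) (memB2 K) ?hne (charB K)
  case hne =>
    intro h
    have := congrFun h 2
    simp at this
  rw [h]
  simp [fdist, Fin.sum_univ_three]
  omega

lemma catFam (K s : ℕ) (hs : s ≤ K+1) :
    catDeg ![2*K+7, 6*K+13, 6*K+17] ((K+4+s)*(6*K+13)) = 3*K+6-s := by
  set Z := Zset ![2*K+7, 6*K+13, 6*K+17] ((K+4+s)*(6*K+13)) with hZdef
  have key : ∀ j, ∀ i, i + j = s →
      IsNChain Z (3*K+6-s) ![3*K+5-3*i, s-i, 2*i+1] ![0, K+4+s, 0] := by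
    intro j
    induction j with
    | zero =>
      intro i hi
      apply chain_edge (memF K s i (by omega) hs) (memT K s)
      simp [fdist, Fin.sum_univ_three]
      omega
    | succ j ih =>
      intro i hi
      refine chain_trans (chain_edge (memF K s i (by omega) hs)
        (memF K s (i+1) (by omega) hs) ?_) (ih (i+1) (by omega))
      simp [fdist, Fin.sum_univ_three]
      omega
  apply catDeg_eq
  · intro x hx y hy
    rcases fam_char K s hs x hx with rfl | ⟨i, hi, rfl⟩ <;>
      rcases fam_char K s hs y hy with rfl | ⟨i', hi', rfl⟩
    · exact chain_refl hx
    · exact chain_symm (key (s - i') i' (by omega))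
    · exact key (s - i) i (by omega)
    · exact chain_trans (key (s - i) i (by omega)) (chain_symm (key (s - i') i' (by omega)))
  · intro N hN
    by_contra hcon
    push_neg at hcon
    refine no_chain ?_ ?_ (hN ![0, K+4+s, 0] (memT K s) ![3*K+5-3*s, s-s, 2*s+1]
      (memF K s s le_rfl hs))
    · intro h
      have := congrFun h 1
      simp at this
    · intro z hz hzne
      rcases fam_char K s hs z hz with rfl | ⟨i, hi, rfl⟩
      · exact absurd rfl hzne
      · simp [fdist, Fin.sum_univ_three]
        omega

/-! ### global bound on the catenary degree -/

lemma canon (K n : ℕ) (x y : Fin 3 → ℕ)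
    (hx : x ∈ Zset ![2*K+7, 6*K+13, 6*K+17] n)
    (hy : y ∈ Zset ![2*K+7, 6*K+13, 6*K+17] n)
    (hx1 : x 1 ≤ 2*K+4) (hx2 : x 2 ≤ 1) (hy1 : y 1 ≤ 2*K+4) (hy2 : y 2 ≤ 1) :
    IsNChain (Zset ![2*K+7, 6*K+13, 6*K+17] n) (3*K+8) x y := by
  have hxe := (mem_Z K n x).1 hx
  have hye := (mem_Z K n y).1 hy
  have hxZ : (x 0 : ℤ)*(2*K+7) + (x 1 : ℤ)*(6*K+13) + (x 2 : ℤ)*(6*K+17) = (n:ℤ) := by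
    exact_mod_cast congrArg (Nat.cast : ℕ → ℤ) hxe
  have hyZ : (y 0 : ℤ)*(2*K+7) + (y 1 : ℤ)*(6*K+13) + (y 2 : ℤ)*(6*K+17) = (n:ℤ) := by
    exact_mod_cast congrArg (Nat.cast : ℕ → ℤ) hye
  have hq : (((x 0 : ℤ) - y 0) + 3*((x 1 : ℤ) - y 1) + 3*((x 2 : ℤ) - y 2)) * (2*(K:ℤ)+7)
      = 4*(2*((x 1 : ℤ) - y 1) + ((x 2 : ℤ) - y 2)) := by
    linear_combination hxZ - hyZ
  obtain ⟨r, hr4, hrX⟩ := div4' _ _ _ (by omega) hq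
  have h1 : -1 ≤ r := by
    by_contra hcon
    push_neg at hcon
    have h2 : r * (2*(K:ℤ)+7) ≤ -2 * (2*(K:ℤ)+7) := by
      apply mul_le_mul_of_nonneg_right (by omega) (by positivity)
    omega
  have h2 : r ≤ 1 := by
    by_contra hcon
    push_neg at hcon
    have h2 : 2 * (2*(K:ℤ)+7) ≤ r * (2*(K:ℤ)+7) := by
      apply mul_le_mul_of_nonneg_right (by omega) (by positivity)
    omega
  have hr : r = -1 ∨ r = 0 ∨ r = 1 := by omega
  apply chain_edge hx hy
  simp only [fdist, Fin.sum_univ_three]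
  rcases hr with rfl | rfl | rfl <;> omega

lemma conn (K : ℕ) : ∀ M n (x y : Fin 3 → ℕ),
    x ∈ Zset ![2*K+7, 6*K+13, 6*K+17] n → y ∈ Zset ![2*K+7, 6*K+13, 6*K+17] n →
    x 1 + x 2 + y 1 + y 2 ≤ M →
    IsNChain (Zset ![2*K+7, 6*K+13, 6*K+17] n) (3*K+8) x y := by
  intro M
  induction M with
  | zero =>
    intro n x y hx hy hM
    exact canon K n x y hx hy (by omega) (by omega) (by omega) (by omega)
  | succ M ih =>
    intro n x y hx hy hM
    have hxZ : (x 0 : ℤ)*(2*K+7) + (x 1 : ℤ)*(6*K+13) + (x 2 : ℤ)*(6*K+17) = (n:ℤ) := by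
      exact_mod_cast congrArg (Nat.cast : ℕ → ℤ) ((mem_Z K n x).1 hx)
    have hyZ : (y 0 : ℤ)*(2*K+7) + (y 1 : ℤ)*(6*K+13) + (y 2 : ℤ)*(6*K+17) = (n:ℤ) := by
      exact_mod_cast congrArg (Nat.cast : ℕ → ℤ) ((mem_Z K n y).1 hy)
    by_cases hc1 : 2 ≤ x 2
    · have hx' : ![x 0 + 3, x 1 + 1, x 2 - 2] ∈ Zset ![2*K+7, 6*K+13, 6*K+17] n := by
        rw [mem_Z']
        zify [hc1]
        linear_combination hxZ
      refine chain_trans (chain_edge hx hx' ?_) (ih n _ y hx' hy ?_)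
      · simp [fdist, Fin.sum_univ_three]
        omega
      · have e1 : (![x 0 + 3, x 1 + 1, x 2 - 2] : Fin 3 → ℕ) 1 = x 1 + 1 := rfl
        have e2 : (![x 0 + 3, x 1 + 1, x 2 - 2] : Fin 3 → ℕ) 2 = x 2 - 2 := rfl
        omega
    · by_cases hc2 : 2*K+5 ≤ x 1
      · have hx' : ![x 0 + 2, x 1 - (2*K+5), x 2 + (2*K+3)] ∈
            Zset ![2*K+7, 6*K+13, 6*K+17] n := by
          rw [mem_Z']
          zify [hc2]
          linear_combination hxZ
        refine chain_trans (chain_edge hx hx' ?_) (ih n _ y hx' hy ?_)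
        · simp [fdist, Fin.sum_univ_three]
          omega
        · have e1 : (![x 0 + 2, x 1 - (2*K+5), x 2 + (2*K+3)] : Fin 3 → ℕ) 1
              = x 1 - (2*K+5) := rfl
          have e2 : (![x 0 + 2, x 1 - (2*K+5), x 2 + (2*K+3)] : Fin 3 → ℕ) 2
              = x 2 + (2*K+3) := rfl
          omega
      · by_cases hc3 : 2 ≤ y 2
        · have hy' : ![y 0 + 3, y 1 + 1, y 2 - 2] ∈ Zset ![2*K+7, 6*K+13, 6*K+17] n := by
            rw [mem_Z']
            zify [hc3]
            linear_combination hyZ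
          refine chain_trans (ih n x _ hx hy' ?_) (chain_edge hy' hy ?_)
          · have e1 : (![y 0 + 3, y 1 + 1, y 2 - 2] : Fin 3 → ℕ) 1 = y 1 + 1 := rfl
            have e2 : (![y 0 + 3, y 1 + 1, y 2 - 2] : Fin 3 → ℕ) 2 = y 2 - 2 := rfl
            omega
          · simp [fdist, Fin.sum_univ_three]
            omega
        · by_cases hc4 : 2*K+5 ≤ y 1
          · have hy' : ![y 0 + 2, y 1 - (2*K+5), y 2 + (2*K+3)] ∈
                Zset ![2*K+7, 6*K+13, 6*K+17] n := by
              rw [mem_Z']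
              zify [hc4]
              linear_combination hyZ
            refine chain_trans (ih n x _ hx hy' ?_) (chain_edge hy' hy ?_)
            · have e1 : (![y 0 + 2, y 1 - (2*K+5), y 2 + (2*K+3)] : Fin 3 → ℕ) 1
                  = y 1 - (2*K+5) := rfl
              have e2 : (![y 0 + 2, y 1 - (2*K+5), y 2 + (2*K+3)] : Fin 3 → ℕ) 2
                  = y 2 + (2*K+3) := rfl
              omega
            · simp [fdist, Fin.sum_univ_three]
              omega
          · exact canon K n x y hx hy (by omega) (by omega) (by omega) (by omega)

lemma catDeg_le (K n : ℕ) : catDeg ![2*K+7, 6*K+13, 6*K+17] n ≤ 3*K+8 :=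
  Nat.sInf_le (fun a ha b hb => conn K (a 1 + a 2 + b 1 + b 2) n a b ha hb le_rfl)

end CatAux

open CatAux in
/-- For k ≥ 3 and S = ⟨2k+1, 6k-5, 6k-1⟩, C(S) contains {4, 3k-1} and the
interval {2k-1, ..., 3k-3}; in particular |C(S)| ≥ k. -/
theorem catSet_large (k : ℕ) (hk : 3 ≤ k) :
    ({4, 3 * k - 1} ∪ Set.Icc (2 * k - 1) (3 * k - 3)
        ⊆ CatSet ![2 * k + 1, 6 * k - 5, 6 * k - 1]) ∧
    k ≤ (CatSet ![2 * k + 1, 6 * k - 5, 6 * k - 1]).ncard := by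
  obtain ⟨K, rfl⟩ : ∃ K, k = 3 + K := ⟨k - 3, by omega⟩
  have hg : (![2*(3+K)+1, 6*(3+K)-5, 6*(3+K)-1] : Fin 3 → ℕ)
      = ![2*K+7, 6*K+13, 6*K+17] := by
    funext i; fin_cases i <;> simp <;> omega
  have e1 : 3*(3+K)-1 = 3*K+8 := by omega
  have e2 : 2*(3+K)-1 = 2*K+5 := by omega
  have e3 : 3*(3+K)-3 = 3*K+6 := by omega
  rw [hg, e1, e2, e3]
  have hsub : ({4, 3*K+8} ∪ Set.Icc (2*K+5) (3*K+6) : Set ℕ)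
      ⊆ CatSet ![2*K+7, 6*K+13, 6*K+17] := by
    intro c hc
    simp only [Set.mem_union, Set.mem_insert_iff, Set.mem_singleton_iff, Set.mem_Icc] at hc
    rcases hc with (rfl | rfl) | ⟨h1, h2⟩
    · exact ⟨12*K+34, ⟨_, memA1 K⟩, catA K⟩
    · exact ⟨(3*K+8)*(2*K+7), ⟨_, memB1 K⟩, catB K⟩
    · refine ⟨(K+4+(3*K+6-c))*(6*K+13), ⟨_, memT K (3*K+6-c)⟩, ?_⟩
      rw [catFam K (3*K+6-c) (by omega)]
      omega
  refine ⟨hsub, ?_⟩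
  have hfin : (CatSet ![2*K+7, 6*K+13, 6*K+17]).Finite := by
    apply Set.Finite.subset (Set.finite_Iic (3*K+8))
    rintro c ⟨n, -, rfl⟩
    exact catDeg_le K n
  have hIcc : (Set.Icc (2*K+5) (3*K+6)).ncard = K+2 := by
    rw [Set.ncard_eq_toFinset_card']
    simp
    omega
  have hT : ({4, 3*K+8} ∪ Set.Icc (2*K+5) (3*K+6) : Set ℕ).ncard = K+4 := by
    have hre : ({4, 3*K+8} ∪ Set.Icc (2*K+5) (3*K+6) : Set ℕ)
        = insert 4 (insert (3*K+8) (Set.Icc (2*K+5) (3*K+6))) := by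
      simp [Set.insert_union]
    rw [hre]
    rw [Set.ncard_insert_of_notMem
        (by simp only [Set.mem_insert_iff, Set.mem_Icc]; omega)
        ((Set.finite_Icc _ _).insert _),
      Set.ncard_insert_of_notMem (by simp only [Set.mem_Icc]; omega)
        (Set.finite_Icc _ _), hIcc]
  have hle := Set.ncard_le_ncard hsub hfin
  omega
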